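/- Sharp Ostrowski-type inequality for the deviation of a value from a mean value: Let a ≤ c < d ≤ b and t ∈ [a,b]. Then for every modulus of continuity ω, every real Banach space E, and every f ∈ H^ω([a,b],E), ‖f(t) − (1/(d−c))∫_c^d f(u) du‖ ≤ (1/(d−c))∫_c^d ω(|s−t|) ds. Moreover, the inequality is sharp: for any unit vector x ∈ E, the function f(s) = ω(|s−t|)·x belongs to H^ω([a,b],E) and turns the inequality into equality. -/
import Mathlib


open MeasureTheory Set

/-- A modulus of continuity: `ω 0 = 0`, continuous, non-decreasing and subadditive on `[0, ∞)`. -/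
def IsModulus (ω : ℝ → ℝ) : Prop :=
  ω 0 = 0 ∧ ContinuousOn ω (Set.Ici 0) ∧ MonotoneOn ω (Set.Ici 0) ∧
    ∀ s t : ℝ, 0 ≤ s → 0 ≤ t → ω (s + t) ≤ ω s + ω t

/-- The class `H^ω([a,b], E)`. -/
def HHolder {E : Type*} [NormedAddCommGroup E] (ω : ℝ → ℝ) (a b : ℝ) (f : ℝ → E) : Prop :=
  ∀ s ∈ Set.Icc a b, ∀ t ∈ Set.Icc a b, ‖f t - f s‖ ≤ ω |t - s|

lemma modulus_nonneg {ω : ℝ → ℝ} (hω : IsModulus ω) {s : ℝ} (hs : 0 ≤ s) : 0 ≤ ω s := by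
  rw [← hω.1]
  exact hω.2.2.1 (mem_Ici.2 le_rfl) (mem_Ici.2 hs) hs

lemma modulus_abs_sub {ω : ℝ → ℝ} (hω : IsModulus ω) {p q : ℝ} (hp : 0 ≤ p) (hq : 0 ≤ q) :
    |ω p - ω q| ≤ ω |p - q| := by
  wlog h : q ≤ p generalizing p q
  · rw [abs_sub_comm, abs_sub_comm p q]; exact this hq hp (le_of_not_ge h)
  have h1 : ω p ≤ ω q + ω (p - q) := by
    have := hω.2.2.2 q (p - q) hq (by linarith)
    simpa using this
  rw [abs_of_nonneg (sub_nonneg.2 (hω.2.2.1 (mem_Ici.2 hq) (mem_Ici.2 hp) h)),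
    abs_of_nonneg (by linarith : (0:ℝ) ≤ p - q)]
  linarith

lemma modulus_comp_continuous {ω : ℝ → ℝ} (hω : IsModulus ω) (t : ℝ) :
    Continuous fun s => ω |s - t| :=
  hω.2.1.comp_continuous (by continuity) (fun s => mem_Ici.2 (abs_nonneg _))

lemma holder_continuousOn {E : Type*} [NormedAddCommGroup E] {ω : ℝ → ℝ} {a b : ℝ} {f : ℝ → E}
    (hω : IsModulus ω) (hf : HHolder ω a b f) : ContinuousOn f (Icc a b) := by
  intro s₀ hs₀
  rw [ContinuousWithinAt, tendsto_iff_norm_sub_tendsto_zero]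
  have h1 : Filter.Tendsto (fun s : ℝ => |s - s₀|) (nhdsWithin s₀ (Icc a b))
      (nhdsWithin 0 (Ici 0)) := by
    rw [tendsto_nhdsWithin_iff]
    constructor
    · have hc : Continuous fun s : ℝ => |s - s₀| := by continuity
      have h2 : Filter.Tendsto (fun s : ℝ => |s - s₀|) (nhds s₀) (nhds 0) := by
        simpa using hc.tendsto s₀
      exact h2.mono_left nhdsWithin_le_nhds
    · exact Filter.Eventually.of_forall fun s => mem_Ici.2 (abs_nonneg _)
  have hten : Filter.Tendsto (fun s => ω |s - s₀|) (nhdsWithin s₀ (Icc a b)) (nhds 0) := by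
    have hcw : Filter.Tendsto ω (nhdsWithin 0 (Ici 0)) (nhds (ω 0)) :=
      hω.2.1 0 (mem_Ici.2 le_rfl)
    have := hcw.comp h1
    rw [hω.1] at this
    exact this
  apply squeeze_zero' (Filter.Eventually.of_forall fun s => norm_nonneg _)
    ?_ hten
  filter_upwards [eventually_mem_nhdsWithin] with s hs
  exact hf s₀ hs₀ s hs

/-- Sharp Ostrowski-type inequality: deviation of a value of `f ∈ H^ω([a,b],E)` from its mean
value over `[c,d] ⊆ [a,b]`, together with sharpness. -/
theorem ostrowski_value_mean_sharp
    {E : Type*} [NormedAddCommGroup E] [NormedSpace ℝ E] [CompleteSpace E]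
    (a b c d t : ℝ) (hac : a ≤ c) (hcd : c < d) (hdb : d ≤ b) (ht : t ∈ Set.Icc a b)
    (ω : ℝ → ℝ) (hω : IsModulus ω) :
    (∀ f : ℝ → E, HHolder ω a b f →
        ‖f t - (d - c)⁻¹ • ∫ u in c..d, f u‖ ≤ (d - c)⁻¹ * ∫ s in c..d, ω |s - t|) ∧
      ∀ x : E, ‖x‖ = 1 →
        HHolder ω a b (fun s => ω |s - t| • x) ∧
          ‖(fun s => ω |s - t| • x) t - (d - c)⁻¹ • ∫ u in c..d, ω |u - t| • x‖ =
            (d - c)⁻¹ * ∫ s in c..d, ω |s - t| := by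
  have hle : c ≤ d := hcd.le
  have hd : (0:ℝ) < d - c := by linarith
  have hωi : IntervalIntegrable (fun s => ω |s - t|) volume c d :=
    (modulus_comp_continuous hω t).intervalIntegrable c d
  constructor
  · intro f hf
    have hfc : ContinuousOn f (Icc c d) :=
      (holder_continuousOn hω hf).mono (Icc_subset_Icc hac hdb)
    have hfi : IntervalIntegrable f volume c d := by
      apply ContinuousOn.intervalIntegrable
      rwa [uIcc_of_le hle]
    have hni : IntervalIntegrable (fun u => ‖f t - f u‖) volume c d := by
      apply ContinuousOn.intervalIntegrable
      rw [uIcc_of_le hle]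
      exact (continuousOn_const.sub hfc).norm
    have key : f t - (d - c)⁻¹ • ∫ u in c..d, f u
        = (d - c)⁻¹ • ∫ u in c..d, (f t - f u) := by
      rw [intervalIntegral.integral_sub intervalIntegrable_const hfi,
        intervalIntegral.integral_const, smul_sub, smul_smul,
        inv_mul_cancel₀ hd.ne', one_smul]
    rw [key, norm_smul, Real.norm_eq_abs, abs_of_pos (inv_pos.2 hd)]
    apply mul_le_mul_of_nonneg_left ?_ (inv_nonneg.2 hd.le)
    calc ‖∫ u in c..d, (f t - f u)‖ ≤ ∫ u in c..d, ‖f t - f u‖ :=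
          intervalIntegral.norm_integral_le_integral_norm hle
      _ ≤ ∫ u in c..d, ω |u - t| := by
          apply intervalIntegral.integral_mono_on hle hni hωi
          intro u hu
          have hu' : u ∈ Icc a b := Icc_subset_Icc hac hdb hu
          have := hf u hu' t ht
          rwa [abs_sub_comm] at this
  · intro x hx
    constructor
    · intro s hs t' ht'
      show ‖ω |t' - t| • x - ω |s - t| • x‖ ≤ ω |t' - s|
      have h1 : ‖ω |t' - t| • x - ω |s - t| • x‖ = |ω (|t' - t|) - ω (|s - t|)| := by
        rw [← sub_smul, norm_smul, hx, mul_one, Real.norm_eq_abs]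
      rw [h1]
      calc |ω (|t' - t|) - ω (|s - t|)| ≤ ω (|(|t' - t|) - (|s - t|)|) :=
            modulus_abs_sub hω (abs_nonneg _) (abs_nonneg _)
        _ ≤ ω |t' - s| := by
            apply hω.2.2.1 (mem_Ici.2 (abs_nonneg _)) (mem_Ici.2 (abs_nonneg _))
            have := abs_abs_sub_abs_le_abs_sub (t' - t) (s - t)
            simpa using this
    · have h0 : (fun s => ω |s - t| • x) t = (0:E) := by simp [hω.1]
      have hint : (0:ℝ) ≤ ∫ s in c..d, ω |s - t| :=
        intervalIntegral.integral_nonneg hle fun u _ => modulus_nonneg hω (abs_nonneg _)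
      rw [h0, zero_sub, norm_neg,
        intervalIntegral.integral_smul_const, smul_smul, norm_smul, hx, mul_one,
        Real.norm_eq_abs, abs_of_nonneg (mul_nonneg (inv_nonneg.2 hd.le) hint)]
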